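/- (Hilbert's Theorem 90 for GL_n) Let L/k be a finite Galois extension of fields, let n ≥ 1, and let ξ : Gal(L/k) → GL_n(L) be a 1-cocycle, i.e. ξ(στ) = ξ(σ) · σ(ξ(τ)) for all σ, τ in Gal(L/k), where σ acts entrywise on matrices. Then ξ is a coboundary: there exists a matrix M in GL_n(L) such that ξ(σ) = M · σ(M)⁻¹ for all σ in Gal(L/k). -/

import Mathlib

open Matrix

/-- **Hilbert's Theorem 90 for GLₙ.** For a finite Galois extension `L/k` and a 1-cocycle
`ξ : Gal(L/k) → GLₙ(L)` (for the entrywise Galois action on matrices), there is a matrix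
`M ∈ GLₙ(L)` with `ξ(σ) = M · σ(M)⁻¹` for all `σ`. -/
theorem hilbert90_GLn {k L : Type*} [Field k] [Field L] [Algebra k L]
    [FiniteDimensional k L] [IsGalois k L] (n : ℕ) (hn : 1 ≤ n)
    (ξ : (L ≃ₐ[k] L) → Matrix (Fin n) (Fin n) L)
    (hunit : ∀ σ, IsUnit (ξ σ).det)
    (hcocycle : ∀ σ τ, ξ (σ * τ) = ξ σ * (ξ τ).map σ) :
    ∃ M : Matrix (Fin n) (Fin n) L, IsUnit M.det ∧
      ∀ σ : L ≃ₐ[k] L, ξ σ = M * (M.map σ)⁻¹ := by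
  classical
  -- ξ 1 = 1
  have hmapone : (ξ 1).map (1 : L ≃ₐ[k] L) = ξ 1 := by
    have : ⇑(1 : L ≃ₐ[k] L) = id := rfl
    rw [this, Matrix.map_id]
  have hξ1 : ξ 1 = 1 := by
    have h := hcocycle 1 1
    rw [one_mul, hmapone] at h
    have h2 : (ξ 1)⁻¹ * ξ 1 = (ξ 1)⁻¹ * (ξ 1 * ξ 1) := by rw [← h]
    rwa [Matrix.nonsing_inv_mul _ (hunit 1), ← Matrix.mul_assoc,
      Matrix.nonsing_inv_mul _ (hunit 1), one_mul, eq_comm] at h2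
  -- map commutes with mulVec
  have hmapmv : ∀ (σ : L ≃ₐ[k] L) (A : Matrix (Fin n) (Fin n) L) (v : Fin n → L),
      (fun i => σ ((A *ᵥ v) i)) = A.map σ *ᵥ (fun i => σ (v i)) := by
    intro σ A v
    funext i
    simp [Matrix.mulVec, dotProduct, map_sum, _root_.map_mul, Matrix.map_apply]
  -- fixed point set of the twisted action
  set V₀ : Set (Fin n → L) :=
    {v | ∀ σ : L ≃ₐ[k] L, ξ σ *ᵥ (fun i => σ (v i)) = v} with hV₀def
  -- elements P c w are in V₀
  have hPmem : ∀ (c : L) (w : Fin n → L),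
      (∑ σ : L ≃ₐ[k] L, ξ σ *ᵥ (fun i => σ (c * w i))) ∈ V₀ := by
    intro c w τ
    have : (fun i => τ ((∑ σ : L ≃ₐ[k] L, ξ σ *ᵥ (fun i => σ (c * w i))) i))
        = ∑ σ : L ≃ₐ[k] L, (fun i => τ ((ξ σ *ᵥ (fun i => σ (c * w i))) i)) := by
      funext i
      simp [Finset.sum_apply, map_sum]
    rw [this, ← Matrix.mulVecLin_apply, map_sum]
    simp only [Matrix.mulVecLin_apply]
    refine Fintype.sum_equiv (Equiv.mulLeft τ) _ _ ?_
    intro σ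
    rw [hmapmv τ]
    rw [Matrix.mulVec_mulVec, ← hcocycle]
    simp [AlgEquiv.mul_apply]
  -- V₀ spans
  have hspan : Submodule.span L V₀ = ⊤ := by
    by_contra hne
    obtain ⟨φ, hφne, hφ⟩ := Submodule.exists_dual_map_eq_bot_of_lt_top
      (lt_top_iff_ne_top.2 hne) inferInstance
    have hker : ∀ v ∈ V₀, φ v = 0 := by
      intro v hv
      have : φ v ∈ Submodule.map φ (Submodule.span L V₀) :=
        Submodule.mem_map_of_mem (Submodule.subset_span hv)
      rw [hφ] at this
      exact (Submodule.mem_bot L).mp this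
    -- Dedekind independence of characters
    have hli : LinearIndependent L (fun (f : L ≃ₐ[k] L) => (f : L → L)) :=
      LinearIndependent.comp (ι' := L ≃ₐ[k] L)
        (linearIndependent_monoidHom L L) (fun f => (f : L →* L))
        (fun x y h => by ext a; exact DFunLike.ext_iff.1 h a)
    apply hφne
    have hw : ∀ w : Fin n → L, φ w = 0 := by
      intro w
      have key : ∀ c : L, ∑ σ : L ≃ₐ[k] L, φ (ξ σ *ᵥ (fun i => σ (w i))) * σ c = 0 := by
        intro c
        have h0 := hker _ (hPmem c w)
        rw [map_sum] at h0
        rw [← h0]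
        refine Finset.sum_congr rfl (fun σ _ => ?_)
        have : (fun i => σ (c * w i)) = σ c • (fun i => σ (w i)) := by
          funext i; simp [_root_.map_mul, mul_comm]
        rw [this, Matrix.mulVec_smul, _root_.map_smul, smul_eq_mul, mul_comm]
      have := Fintype.linearIndependent_iff.1 hli
        (fun σ => φ (ξ σ *ᵥ (fun i => σ (w i)))) ?_ 1
      · rw [hξ1] at this
        simpa using this
      · funext c
        simpa using key c
    exact LinearMap.ext fun w => by simp [hw w]
  -- choose a basis inside V₀
  obtain ⟨b, hbsub, hbspan, hbli⟩ := exists_linearIndependent L V₀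
  rw [hspan] at hbspan
  let B : Module.Basis b L (Fin n → L) := Module.Basis.mk hbli (by rw [Subtype.range_coe, hbspan])
  have : Fintype b := FiniteDimensional.fintypeBasisIndex B
  let e : Fin n ≃ b := Module.Basis.indexEquiv (Pi.basisFun L (Fin n)) B
  let C : Module.Basis (Fin n) L (Fin n → L) := B.reindex e.symm
  have hC : ∀ j, (C j) ∈ V₀ := by
    intro j
    have : C j = ((e j : b) : Fin n → L) := by
      simp [C, B, Module.Basis.reindex_apply, Module.Basis.mk_apply]
    rw [this]
    exact hbsub (e j).2
  set M := (Pi.basisFun L (Fin n)).toMatrix C with hM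
  have hMdet : IsUnit M.det := by
    have := Module.Basis.invertibleToMatrix (Pi.basisFun L (Fin n)) C
    exact Matrix.isUnit_det_of_invertible _
  refine ⟨M, hMdet, ?_⟩
  · intro σ
    have hMij : ∀ i j, M i j = C j i := by
      intro i j
      simp [hM, Module.Basis.toMatrix_apply]
    have hmul : ξ σ * M.map σ = M := by
      ext i j
      have hcol := hC j σ
      have := congrFun hcol i
      simpa [Matrix.mul_apply, Matrix.mulVec, dotProduct, Matrix.map_apply,
        hMij] using this
    have hdet : IsUnit (M.map ⇑σ).det := by
      have hh : (M.map ⇑σ).det = σ M.det := ((σ : L →+* L).map_det M).symm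
      rw [hh]
      exact hMdet.map (σ : L →* L)
    calc ξ σ = ξ σ * (M.map σ * (M.map σ)⁻¹) := by
          rw [Matrix.mul_nonsing_inv _ hdet, Matrix.mul_one]
      _ = M * (M.map σ)⁻¹ := by rw [← Matrix.mul_assoc, hmul]
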